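/- arXiv:1410.3777 — 2 statements merged into one kernel-verified Lean document; each statement's English description precedes it below -/
import Mathlib

section
/- For every real number x ≥ 2, the limit as σ → 1⁺ of ( log ζ(σ) + ∫_σ^∞ x^{1−α}/(1−α) dα ) exists and equals log log x + γ. -/
open Filter MeasureTheory Real Set

lemma abs_log_le_aux (t : ℝ) (ht : 0 < t) : |Real.log t| ≤ t + 2 * t ^ (-(1:ℝ)/2) := by
  have h2 : (0:ℝ) ≤ 2 * t ^ (-(1:ℝ)/2) := by positivity
  rcases le_or_gt 1 t with h | h
  · rw [abs_of_nonneg (Real.log_nonneg h)]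
    have := Real.log_le_sub_one_of_pos ht
    nlinarith
  · rw [abs_of_nonpos (Real.log_nonpos ht.le h.le)]
    have h3 : Real.log (t ^ (-(1:ℝ)/2)) ≤ t ^ (-(1:ℝ)/2) - 1 :=
      Real.log_le_sub_one_of_pos (Real.rpow_pos_of_pos ht _)
    rw [Real.log_rpow ht] at h3
    nlinarith

lemma integrableOn_exp_neg_mul_log :
    IntegrableOn (fun t => Real.exp (-t) * Real.log t) (Set.Ioi (0:ℝ)) := by
  have h1 : IntegrableOn (fun t : ℝ => Real.exp (-t) * t ^ ((2:ℝ) - 1)) (Set.Ioi 0) :=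
    Real.GammaIntegral_convergent two_pos
  have h2 : IntegrableOn (fun t : ℝ => 2 * (Real.exp (-t) * t ^ ((1:ℝ)/2 - 1))) (Set.Ioi 0) :=
    (Real.GammaIntegral_convergent (by norm_num : (0:ℝ) < 1/2)).const_mul 2
  refine Integrable.mono (h1.add h2) ?_ ?_
  · exact ((Real.measurable_exp.comp measurable_neg).mul
      Real.measurable_log).aestronglyMeasurable.restrict
  · filter_upwards [ae_restrict_mem measurableSet_Ioi] with t ht
    have ht0 : (0:ℝ) < t := ht
    have hb := abs_log_le_aux t ht0
    have he : (0:ℝ) < Real.exp (-t) := Real.exp_pos _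
    rw [Real.norm_eq_abs, Real.norm_eq_abs, abs_mul, abs_of_pos he]
    have hrhs : Real.exp (-t) * t ^ ((2:ℝ)-1) + 2 * (Real.exp (-t) * t ^ ((1:ℝ)/2-1))
        = Real.exp (-t) * (t + 2 * t ^ (-(1:ℝ)/2)) := by
      rw [show ((2:ℝ) - 1) = 1 by norm_num, Real.rpow_one,
        show ((1:ℝ)/2 - 1) = -(1:ℝ)/2 by norm_num]
      ring
    calc Real.exp (-t) * |Real.log t| ≤ Real.exp (-t) * (t + 2 * t ^ (-(1:ℝ)/2)) :=
          mul_le_mul_of_nonneg_left hb he.le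
      _ ≤ |Real.exp (-t) * t ^ ((2:ℝ)-1) + 2 * (Real.exp (-t) * t ^ ((1:ℝ)/2-1))| := by
          rw [hrhs]; exact le_abs_self _

lemma integral_exp_neg_mul_log :
    ∫ t in Set.Ioi (0:ℝ), Real.exp (-t) * Real.log t = -Real.eulerMascheroniConstant := by
  have h1 := Complex.hasDerivAt_GammaIntegral (s := 1) (by norm_num)
  have hI : (∫ t : ℝ in Ioi 0, (t:ℂ) ^ ((1:ℂ) - 1) * (Real.log t * Real.exp (-t)))
      = ((∫ t in Set.Ioi (0:ℝ), Real.exp (-t) * Real.log t : ℝ) : ℂ) := by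
    have hI' : ∫ t in Set.Ioi (0:ℝ), ((Real.exp (-t) * Real.log t : ℝ) : ℂ)
        = ((∫ t in Set.Ioi (0:ℝ), Real.exp (-t) * Real.log t : ℝ) : ℂ) := integral_ofReal
    rw [← hI']
    refine setIntegral_congr_fun measurableSet_Ioi fun t ht => ?_
    simp only [sub_self, Complex.cpow_zero, one_mul, Complex.ofReal_mul]
    push_cast
    ring
  rw [hI] at h1
  have h2 : Complex.Gamma =ᶠ[nhds (1:ℂ)] Complex.GammaIntegral := by
    filter_upwards [IsOpen.mem_nhds (isOpen_lt continuous_const Complex.continuous_re)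
      (by norm_num : (0:ℝ) < (1:ℂ).re)] with s hs
    exact Complex.Gamma_eq_integral hs
  have h3 : HasDerivAt Complex.Gamma
      (((∫ t in Set.Ioi (0:ℝ), Real.exp (-t) * Real.log t : ℝ) : ℂ)) 1 :=
    h1.congr_of_eventuallyEq h2
  have h4 := h3.real_of_complex
  have h5 : (fun x : ℝ => (Complex.Gamma (x : ℂ)).re) = Real.Gamma := by
    ext y; rw [Complex.Gamma_ofReal, Complex.ofReal_re]
  rw [h5, Complex.ofReal_re] at h4
  have := Real.hasDerivAt_Gamma_one.unique h4
  linarith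

lemma integrableOn_exp_div {s : ℝ} (hs : 0 < s) :
    IntegrableOn (fun t => Real.exp (-t) / t) (Set.Ioi s) := by
  have h1 : IntegrableOn (fun t : ℝ => s⁻¹ * Real.exp (-(1:ℝ) * t)) (Set.Ioi s) :=
    (exp_neg_integrableOn_Ioi s one_pos).const_mul _
  refine Integrable.mono h1 ?_ ?_
  · exact ((Real.measurable_exp.comp measurable_neg).div
      measurable_id).aestronglyMeasurable.restrict
  · filter_upwards [ae_restrict_mem measurableSet_Ioi] with t ht
    have ht0 : 0 < t := hs.trans ht
    rw [Real.norm_eq_abs, Real.norm_eq_abs, abs_of_pos (by positivity), abs_of_pos (by positivity)]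
    rw [div_eq_mul_inv, neg_one_mul, mul_comm (s⁻¹)]
    exact mul_le_mul_of_nonneg_left (inv_anti₀ hs ht.le) (Real.exp_pos _).le

lemma E1_eq {s : ℝ} (hs : 0 < s) :
    ∫ t in Set.Ioi s, Real.exp (-t) / t
      = (∫ t in Set.Ioi s, Real.exp (-t) * Real.log t) - Real.exp (-s) * Real.log s := by
  have key : ∫ t in Set.Ioi s, (Real.exp (-t) * Real.log t - Real.exp (-t) / t)
      = 0 - (-Real.exp (-s) * Real.log s) := by
    refine integral_Ioi_of_hasDerivAt_of_tendsto' (f := fun t => -Real.exp (-t) * Real.log t)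
      (fun t ht => ?_) ?_ ?_
    · have ht0 : 0 < t := lt_of_lt_of_le hs ht
      have h1 : HasDerivAt (fun t : ℝ => -Real.exp (-t)) (Real.exp (-t)) t := by
        have h := ((Real.hasDerivAt_exp (-t)).comp t (hasDerivAt_neg t)).neg
        simp at h
        exact h
      have h2 := h1.mul (Real.hasDerivAt_log ht0.ne')
      exact h2.congr_deriv (by ring)
    · exact (integrableOn_exp_neg_mul_log.mono_set
        (Set.Ioi_subset_Ioi hs.le)).sub (integrableOn_exp_div hs)
    · refine squeeze_zero_norm' ?_ (tendsto_pow_mul_exp_neg_atTop_nhds_zero 1)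
      filter_upwards [eventually_ge_atTop (1:ℝ)] with t ht
      have ht0 : (0:ℝ) < t := lt_of_lt_of_le one_pos ht
      rw [Real.norm_eq_abs, abs_mul, abs_neg, abs_of_pos (Real.exp_pos _),
        abs_of_nonneg (Real.log_nonneg ht), pow_one, mul_comm t]
      exact mul_le_mul_of_nonneg_left ((Real.log_le_sub_one_of_pos ht0).trans (by linarith))
        (Real.exp_pos _).le
  rw [MeasureTheory.integral_sub (integrableOn_exp_neg_mul_log.mono_set
        (Set.Ioi_subset_Ioi hs.le)) (integrableOn_exp_div hs)] at key
  linarith [key]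

lemma tendsto_tail_integral :
    Tendsto (fun s : ℝ => ∫ t in Set.Ioi s, Real.exp (-t) * Real.log t)
      (nhdsWithin 0 (Set.Ioi 0))
      (nhds (∫ t in Set.Ioi (0:ℝ), Real.exp (-t) * Real.log t)) := by
  set g : ℝ → ℝ := fun t => Real.exp (-t) * Real.log t with hg
  have key : Tendsto (fun s : ℝ => ∫ t in Set.Ioi (0:ℝ), (Set.Ioi s).indicator g t)
      (nhdsWithin 0 (Set.Ioi 0)) (nhds (∫ t in Set.Ioi (0:ℝ), g t)) := by
    refine tendsto_integral_filter_of_dominated_convergence (fun t => ‖g t‖)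
      (Eventually.of_forall fun s => ?_) (Eventually.of_forall fun s => ?_) ?_ ?_
    · exact (integrableOn_exp_neg_mul_log.aestronglyMeasurable).indicator measurableSet_Ioi
    · exact Eventually.of_forall fun t => norm_indicator_le_norm_self g t
    · exact integrableOn_exp_neg_mul_log.norm
    · filter_upwards [ae_restrict_mem measurableSet_Ioi] with t ht
      have : ∀ᶠ s in nhdsWithin 0 (Set.Ioi 0), (Set.Ioi s).indicator g t = g t := by
        filter_upwards [Ioo_mem_nhdsGT_of_mem (⟨le_refl 0, ht⟩ : (0:ℝ) ∈ Set.Ico 0 t)] with s hs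
        exact Set.indicator_of_mem (hs.2 : t ∈ Set.Ioi s) g
      exact Tendsto.congr' (this.mono fun s h => h.symm) tendsto_const_nhds
  refine key.congr' ?_
  filter_upwards [self_mem_nhdsWithin] with s hs
  rw [MeasureTheory.integral_indicator measurableSet_Ioi,
    Measure.restrict_restrict measurableSet_Ioi, Set.Ioi_inter_Ioi,
    max_eq_left (le_of_lt hs)]

lemma tendsto_E1_add_log :
    Tendsto (fun s : ℝ => (∫ t in Set.Ioi s, Real.exp (-t) / t) + Real.log s)
      (nhdsWithin 0 (Set.Ioi 0)) (nhds (-Real.eulerMascheroniConstant)) := by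
  have h2 : Tendsto (fun s : ℝ => (1 - Real.exp (-s)) * Real.log s)
      (nhdsWithin 0 (Set.Ioi 0)) (nhds 0) := by
    refine squeeze_zero_norm' ?_ (by simpa using (tendsto_log_mul_rpow_nhdsGT_zero one_pos).abs)
    filter_upwards [Ioo_mem_nhdsGT_of_mem (by norm_num : (0:ℝ) ∈ Set.Ico 0 1)] with s hs
    have hs0 := hs.1
    have h1e : 0 ≤ 1 - Real.exp (-s) := by
      simpa using Real.exp_le_one_iff.mpr (by linarith : -s ≤ 0)
    have h1e' : 1 - Real.exp (-s) ≤ s := by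
      nlinarith [Real.add_one_le_exp (-s)]
    rw [Real.norm_eq_abs, abs_mul, mul_comm |Real.log s| |s|]
    refine mul_le_mul_of_nonneg_right ?_ (abs_nonneg _)
    rw [abs_of_nonneg h1e, abs_of_pos hs0]
    exact h1e'
  have h3 := tendsto_tail_integral.add h2
  rw [integral_exp_neg_mul_log, add_zero] at h3
  refine h3.congr' ?_
  filter_upwards [self_mem_nhdsWithin] with s hs
  have hs0 : (0:ℝ) < s := hs
  rw [E1_eq hs0]
  ring

lemma tendsto_log_zeta : Tendsto (fun σ : ℝ => Real.log (riemannZeta (σ:ℂ)).re + Real.log (σ - 1))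
    (nhdsWithin 1 (Set.Ioi 1)) (nhds 0) := by
  have h0 : Tendsto (fun σ : ℝ => (σ:ℂ)) (nhdsWithin 1 (Set.Ioi 1))
      (nhdsWithin 1 {(1:ℂ)}ᶜ) := by
    refine (Complex.continuous_ofReal.continuousWithinAt).tendsto_nhdsWithin ?_
    intro σ hσ
    simp only [Set.mem_compl_iff, Set.mem_singleton_iff]
    exact fun h => absurd (by exact_mod_cast h) (ne_of_gt (Set.mem_Ioi.mp hσ))
  have h1 : Tendsto (fun σ : ℝ => ((σ:ℂ) - 1) * riemannZeta (σ:ℂ))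
      (nhdsWithin 1 (Set.Ioi 1)) (nhds 1) := riemannZeta_residue_one.comp h0
  have h2 : Tendsto (fun σ : ℝ => (σ - 1) * (riemannZeta (σ:ℂ)).re)
      (nhdsWithin 1 (Set.Ioi 1)) (nhds 1) := by
    have := (Complex.continuous_re.tendsto 1).comp h1
    simp only [Complex.one_re] at this
    refine this.congr fun σ => ?_
    simp [Complex.sub_re, Complex.ofReal_re, Complex.one_re, Complex.mul_re, Complex.sub_im,
      Complex.ofReal_im, Complex.one_im]
  have h3 : Tendsto (fun σ : ℝ => Real.log ((σ - 1) * (riemannZeta (σ:ℂ)).re))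
      (nhdsWithin 1 (Set.Ioi 1)) (nhds 0) := by
    have := (Real.continuousAt_log one_ne_zero).tendsto.comp h2
    simpa [Function.comp_def] using this
  refine h3.congr' ?_
  filter_upwards [self_mem_nhdsWithin,
    h2.eventually (eventually_gt_nhds (by norm_num : (0:ℝ) < 1))] with σ hσ hpos
  have hσ1 : (0:ℝ) < σ - 1 := sub_pos.mpr hσ
  have hre : (0:ℝ) < (riemannZeta (σ:ℂ)).re := by
    by_contra h
    push_neg at h
    nlinarith
  rw [Real.log_mul hσ1.ne' hre.ne']
  ring

lemma integral_Ioi_comp_sub (h : ℝ → ℝ) (a c : ℝ) :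
    ∫ u in Set.Ioi a, h (u - c) = ∫ u in Set.Ioi (a - c), h u := by
  rw [← MeasureTheory.integral_indicator measurableSet_Ioi,
    ← MeasureTheory.integral_indicator measurableSet_Ioi]
  rw [← MeasureTheory.integral_sub_right_eq_self (fun u => (Set.Ioi (a - c)).indicator h u) c]
  congr 1
  ext u
  by_cases hu : u ∈ Set.Ioi a
  · rw [Set.indicator_of_mem hu, Set.indicator_of_mem (by simpa using sub_lt_sub_right hu c)]
  · have hu2 : u - c ∉ Set.Ioi (a - c) := fun hh => hu (by
      simp only [Set.mem_Ioi] at hh ⊢; linarith)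
    rw [Set.indicator_of_notMem hu, Set.indicator_of_notMem hu2]

lemma integral_subst (x : ℝ) (hx : 2 ≤ x) (σ : ℝ) :
    ∫ α in Set.Ioi σ, x ^ (1 - α) / (1 - α)
      = -∫ t in Set.Ioi ((σ - 1) * Real.log x), Real.exp (-t) / t := by
  have hx0 : 0 < x := by linarith
  have hL : 0 < Real.log x := Real.log_pos (by linarith)
  set L := Real.log x with hLdef
  have step1 : ∀ α : ℝ, x ^ (1 - α) / (1 - α)
      = (fun u => -L * (Real.exp (-(u - L)) / (u - L))) (L * α) := by
    intro α
    simp only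
    rcases eq_or_ne α 1 with rfl | hα
    · simp
    · have hne : 1 - α ≠ 0 := sub_ne_zero.mpr (Ne.symm hα)
      have hne2 : L * α - L ≠ 0 := by
        intro h
        exact hα (by nlinarith [hL])
      rw [Real.rpow_def_of_pos hx0, ← hLdef,
        show L * (1 - α) = -(L * α - L) by ring]
      field_simp
      ring
  calc ∫ α in Set.Ioi σ, x ^ (1 - α) / (1 - α)
      = ∫ α in Set.Ioi σ, (fun u => -L * (Real.exp (-(u - L)) / (u - L))) (L * α) :=
        setIntegral_congr_fun measurableSet_Ioi fun α _ => step1 α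
    _ = L⁻¹ • ∫ u in Set.Ioi (L * σ), -L * (Real.exp (-(u - L)) / (u - L)) :=
        MeasureTheory.integral_comp_mul_left_Ioi
          (fun u => -L * (Real.exp (-(u - L)) / (u - L))) σ hL
    _ = L⁻¹ • ∫ v in Set.Ioi (L * σ - L), -L * (Real.exp (-v) / v) :=
        congrArg _ (integral_Ioi_comp_sub (fun v => -L * (Real.exp (-v) / v)) (L * σ) L)
    _ = -∫ t in Set.Ioi ((σ - 1) * L), Real.exp (-t) / t := by
        rw [MeasureTheory.integral_const_mul, smul_eq_mul,
          show L * σ - L = (σ - 1) * L by ring]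
        field_simp

/-- For `x ≥ 2`, `lim_{σ→1⁺} ( log ζ(σ) + ∫_σ^∞ x^{1-α}/(1-α) dα ) = log log x + γ`.
(For real `σ > 1`, `ζ(σ)` is real and positive, so `log ζ(σ)` is `Real.log` of its
real part.) -/
theorem tendsto_log_zeta_add_integral (x : ℝ) (hx : 2 ≤ x) :
    Tendsto
      (fun σ : ℝ => Real.log (riemannZeta (σ : ℂ)).re +
        ∫ α in Set.Ioi σ, x ^ (1 - α) / (1 - α))
      (nhdsWithin 1 (Set.Ioi 1))
      (nhds (Real.log (Real.log x) + Real.eulerMascheroniConstant)) := by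
  have hL : 0 < Real.log x := Real.log_pos (by linarith)
  set L := Real.log x with hLdef
  -- the map σ ↦ (σ - 1) * L tends to 0⁺
  have hm : Tendsto (fun σ : ℝ => (σ - 1) * L) (nhdsWithin 1 (Set.Ioi 1))
      (nhdsWithin 0 (Set.Ioi 0)) := by
    have hc : ContinuousWithinAt (fun σ : ℝ => (σ - 1) * L) (Set.Ioi 1) 1 :=
      (((continuous_id.sub continuous_const).mul continuous_const).continuousWithinAt)
    have hmaps : Set.MapsTo (fun σ : ℝ => (σ - 1) * L) (Set.Ioi 1) (Set.Ioi 0) := by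
      intro σ hσ
      have h1 : (1:ℝ) < σ := hσ
      exact Set.mem_Ioi.mpr (mul_pos (by linarith) hL)
    have := hc.tendsto_nhdsWithin hmaps
    simpa using this
  have hE := tendsto_E1_add_log.comp hm
  have hG : Tendsto (fun σ : ℝ =>
      (Real.log (riemannZeta (σ:ℂ)).re + Real.log (σ - 1)) +
      (Real.log L - ((∫ t in Set.Ioi ((σ - 1) * L), Real.exp (-t) / t) +
        Real.log ((σ - 1) * L))))
      (nhdsWithin 1 (Set.Ioi 1))
      (nhds (0 + (Real.log L - -Real.eulerMascheroniConstant))) :=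
    tendsto_log_zeta.add (tendsto_const_nhds.sub hE)
  have hval : (0:ℝ) + (Real.log L - -Real.eulerMascheroniConstant)
      = Real.log L + Real.eulerMascheroniConstant := by ring
  rw [hval] at hG
  refine hG.congr' ?_
  filter_upwards [self_mem_nhdsWithin] with σ hσ
  have hσ1 : (0:ℝ) < σ - 1 := sub_pos.mpr hσ
  rw [integral_subst x hx σ, Real.log_mul hσ1.ne' hL.ne']
  ring
end

section
/- There is an absolute constant C > 0 such that for every real x ≥ 2 and every complex number ρ with 0 < Re(ρ) < 1 and Im(ρ) ≠ 0, | ∫_1^∞ x^{−α}/(ρ−α) dα − 1/(x (log x)(ρ−1)) | ≤ C/( x (log x)² Im(ρ)² ). -/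
open Filter MeasureTheory Real Set

lemma aux_tendsto (L : ℝ) (hL : 0 < L) (c d : ℝ) :
    Tendsto (fun α : ℝ => Real.exp (-(L * α)) * (c * α + d)) atTop (nhds 0) := by
  have h1 : Tendsto (fun α : ℝ => L * α) atTop atTop :=
    tendsto_id.const_mul_atTop hL
  have h2 := (Real.tendsto_pow_mul_exp_neg_atTop_nhds_zero 1).comp h1
  have h3 := Real.tendsto_exp_neg_atTop_nhds_zero.comp h1
  have h4 := (h2.const_mul (c / L)).add (h3.const_mul d)
  simp only [mul_zero, add_zero, zero_add] at h4
  refine h4.congr fun α => ?_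
  simp only [Function.comp, pow_one]
  field_simp

lemma aux_intB (L : ℝ) (hL : 0 < L) :
    IntegrableOn (fun α : ℝ => Real.exp (-(L * α)) * (α - 1)) (Ioi 1) := by
  refine integrable_of_isBigO_exp_neg (half_pos hL) ?_ ?_
  · exact ((Real.continuous_exp.comp (continuous_const.mul continuous_id).neg).mul
      (continuous_id.sub continuous_const)).continuousOn
  · rw [Asymptotics.isBigO_iff]
    refine ⟨2 / L, ?_⟩
    have h := aux_tendsto (L / 2) (half_pos hL) 1 (-1)
    have hb := h.eventually (eventually_abs_sub_lt 0 (by positivity : (0:ℝ) < 2 / L))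
    filter_upwards [hb] with α hα
    rw [Real.norm_eq_abs, Real.norm_eq_abs, abs_of_pos (Real.exp_pos _)]
    have key : Real.exp (-(L * α)) * (α - 1) =
        Real.exp (-(L / 2 * α)) * (1 * α + -1) * Real.exp (-(L / 2) * α) := by
      rw [mul_comm _ (Real.exp (-(L / 2) * α)), ← mul_assoc, ← Real.exp_add]
      ring_nf
    rw [key, abs_mul, abs_of_pos (Real.exp_pos _)]
    rw [sub_zero] at hα
    exact mul_le_mul_of_nonneg_right hα.le (Real.exp_pos _).le

lemma aux_IA (L : ℝ) (hL : 0 < L) :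
    ∫ α in Ioi (1:ℝ), Real.exp (-(L * α)) = Real.exp (-L) / L := by
  have hderiv : ∀ α ∈ Ici (1:ℝ),
      HasDerivAt (fun y : ℝ => -Real.exp (-(L * y)) / L) (Real.exp (-(L * α))) α := by
    intro α _
    have h0 : HasDerivAt (fun y : ℝ => -(L * y)) (-L) α := by
      simpa using ((hasDerivAt_id α).const_mul L).fun_neg
    have := (h0.exp.fun_neg).div_const L
    refine this.congr_deriv ?_
    field_simp [hL.ne']
  have hint : IntegrableOn (fun α : ℝ => Real.exp (-(L * α))) (Ioi 1) := by
    simpa [neg_mul] using exp_neg_integrableOn_Ioi 1 hL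
  have htend : Tendsto (fun α : ℝ => -Real.exp (-(L * α)) / L) atTop (nhds 0) := by
    refine (aux_tendsto L hL 0 (-1 / L)).congr fun α => ?_
    field_simp
    ring
  rw [integral_Ioi_of_hasDerivAt_of_tendsto' hderiv hint htend]
  ring_nf

lemma aux_IB (L : ℝ) (hL : 0 < L) :
    ∫ α in Ioi (1:ℝ), Real.exp (-(L * α)) * (α - 1) = Real.exp (-L) / L ^ 2 := by
  have hderiv : ∀ α ∈ Ici (1:ℝ),
      HasDerivAt (fun y : ℝ => -Real.exp (-(L * y)) * ((y - 1) / L + 1 / L ^ 2))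
        (Real.exp (-(L * α)) * (α - 1)) α := by
    intro α _
    have h0 : HasDerivAt (fun y : ℝ => -(L * y)) (-L) α := by
      simpa using ((hasDerivAt_id α).const_mul L).fun_neg
    have hu := h0.exp.fun_neg
    have hv : HasDerivAt (fun y : ℝ => (y - 1) / L + 1 / L ^ 2) (1 / L) α :=
      (((hasDerivAt_id α).sub_const 1).div_const L).add_const (1 / L ^ 2)
    have := hu.mul hv
    refine this.congr_deriv ?_
    field_simp [hL.ne']
    ring
  have htend : Tendsto (fun α : ℝ => -Real.exp (-(L * α)) * ((α - 1) / L + 1 / L ^ 2))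
      atTop (nhds 0) := by
    refine (aux_tendsto L hL (-1 / L) (1 / L - 1 / L ^ 2)).congr fun α => ?_
    field_simp
    ring
  rw [integral_Ioi_of_hasDerivAt_of_tendsto' hderiv (aux_intB L hL) htend]
  field_simp
  ring


/-- For `x ≥ 2` and a complex `ρ` with `0 < Re ρ < 1` and `Im ρ ≠ 0`,
`∫_1^∞ x^{-α}/(ρ-α) dα = 1/(x (log x)(ρ-1)) + O(1/(x (log x)² (Im ρ)²))`. -/
theorem integral_rpow_div_sub_approx :
    ∃ C : ℝ, 0 < C ∧ ∀ (x : ℝ) (ρ : ℂ), 2 ≤ x → 0 < ρ.re → ρ.re < 1 → ρ.im ≠ 0 →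
      ‖(∫ α in Set.Ioi (1 : ℝ), ((x ^ (-α) : ℝ) : ℂ) / (ρ - (α : ℂ))) -
            1 / (x * Real.log x * (ρ - 1))‖ ≤
        C / (x * (Real.log x) ^ 2 * ρ.im ^ 2) := by
  refine ⟨1, one_pos, fun x ρ hx hre0 hre1 him => ?_⟩
  have hx0 : (0:ℝ) < x := by linarith
  set L := Real.log x with hLdef
  have hL : 0 < L := Real.log_pos (by linarith)
  have hxa : ∀ α : ℝ, x ^ (-α) = Real.exp (-(L * α)) := by
    intro α; rw [rpow_def_of_pos hx0, mul_neg]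
  -- real integrability and integrals
  have hA : IntegrableOn (fun α : ℝ => x ^ (-α)) (Ioi 1) := by
    simp only [hxa, neg_mul_eq_neg_mul]
    exact exp_neg_integrableOn_Ioi 1 hL
  have hB : IntegrableOn (fun α : ℝ => x ^ (-α) * (α - 1)) (Ioi 1) := by
    simp only [hxa]; exact aux_intB L hL
  have hexpL : Real.exp (-L) = x⁻¹ := by rw [Real.exp_neg, Real.exp_log hx0]
  have IA : ∫ α in Ioi (1:ℝ), x ^ (-α) = 1 / (x * L) := by
    simp only [hxa]; rw [aux_IA L hL, hexpL]; field_simp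
  have IB : ∫ α in Ioi (1:ℝ), x ^ (-α) * (α - 1) = 1 / (x * L ^ 2) := by
    simp only [hxa]; rw [aux_IB L hL, hexpL]; field_simp
  -- nonvanishing denominators
  have hρα : ∀ α : ℝ, ρ - (α : ℂ) ≠ 0 := by
    intro α h
    apply him
    have := congrArg Complex.im h
    simpa using this
  have hρ1 : ρ - 1 ≠ 0 := by
    have := hρα 1; simpa using this
  -- complex integrability
  have hcont1 : Continuous fun α : ℝ => ((x ^ (-α) : ℝ) : ℂ) := by
    apply Complex.continuous_ofReal.comp
    simp only [hxa]
    exact Real.continuous_exp.comp (continuous_const.mul continuous_id).neg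
  have hcont2 : Continuous fun α : ℝ => ρ - (α : ℂ) :=
    continuous_const.sub Complex.continuous_ofReal
  have hf_int : IntegrableOn (fun α : ℝ => ((x ^ (-α) : ℝ) : ℂ) / (ρ - (α : ℂ))) (Ioi 1) := by
    refine Integrable.mono' ((hA.mul_const |ρ.im|⁻¹)) ?_ ?_
    · exact ((hcont1.div hcont2 hρα).aestronglyMeasurable).restrict
    · refine Eventually.of_forall fun α => ?_
      rw [norm_div, Complex.norm_real, Real.norm_eq_abs,
        abs_of_nonneg (rpow_nonneg hx0.le _), div_eq_mul_inv]
      refine mul_le_mul_of_nonneg_left ?_ (rpow_nonneg hx0.le _)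
      rw [inv_le_inv₀ (norm_pos_iff.2 (hρα α)) (abs_pos.2 him)]
      calc |ρ.im| = |(ρ - (α:ℂ)).im| := by simp
        _ ≤ ‖ρ - (α:ℂ)‖ := Complex.abs_im_le_norm _
  have hg_int : IntegrableOn (fun α : ℝ => ((x ^ (-α) : ℝ) : ℂ) / (ρ - 1)) (Ioi 1) :=
    hA.ofReal.div_const _
  -- value of the second integral
  have hIg : ∫ α in Ioi (1:ℝ), ((x ^ (-α) : ℝ) : ℂ) / (ρ - 1)
      = 1 / (x * L * (ρ - 1)) := by
    have hcast : ∫ a in Ioi (1:ℝ), ((x ^ (-a) : ℝ) : ℂ)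
        = ((∫ a in Ioi (1:ℝ), x ^ (-a) : ℝ) : ℂ) := integral_ofReal
    rw [integral_div, hcast, IA]
    push_cast
    rw [div_div]
  -- rewrite the difference as a single integral
  have key : (∫ α in Set.Ioi (1 : ℝ), ((x ^ (-α) : ℝ) : ℂ) / (ρ - (α : ℂ))) -
      1 / (x * L * (ρ - 1)) =
      ∫ α in Ioi (1:ℝ), ((x ^ (-α) : ℝ) : ℂ) * ((α : ℂ) - 1) / ((ρ - (α : ℂ)) * (ρ - 1)) := by
    rw [← hIg, ← integral_sub hf_int hg_int]
    refine integral_congr_ae (Eventually.of_forall fun α => ?_)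
    have h1 := hρα α
    field_simp
    ring
  rw [key]
  have hbound : IntegrableOn (fun α : ℝ => x ^ (-α) * (α - 1) * (ρ.im ^ 2)⁻¹) (Ioi 1) :=
    hB.mul_const _
  calc ‖∫ α in Ioi (1:ℝ), ((x ^ (-α) : ℝ) : ℂ) * ((α : ℂ) - 1) / ((ρ - (α : ℂ)) * (ρ - 1))‖
      ≤ ∫ α in Ioi (1:ℝ), x ^ (-α) * (α - 1) * (ρ.im ^ 2)⁻¹ := by
        refine norm_integral_le_of_norm_le hbound ?_
        filter_upwards [ae_restrict_mem measurableSet_Ioi] with α hα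
        have hα1 : (1:ℝ) < α := hα
        have hnum : ‖((x ^ (-α) : ℝ) : ℂ) * ((α : ℂ) - 1)‖ = x ^ (-α) * (α - 1) := by
          rw [norm_mul, Complex.norm_real, Real.norm_eq_abs,
            abs_of_nonneg (rpow_nonneg hx0.le _)]
          congr 1
          rw [show ((α : ℂ) - 1) = ((α - 1 : ℝ) : ℂ) by push_cast; ring,
            Complex.norm_real, Real.norm_eq_abs, abs_of_nonneg (by linarith)]
        rw [norm_div, hnum, div_eq_mul_inv]
        refine mul_le_mul_of_nonneg_left ?_ (mul_nonneg (rpow_nonneg hx0.le _) (by linarith))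
        rw [inv_le_inv₀ ?_ (by positivity)]
        · calc ρ.im ^ 2 = |ρ.im| * |ρ.im| := by
                rw [abs_mul_abs_self]; ring
            _ ≤ ‖ρ - (α:ℂ)‖ * ‖ρ - 1‖ := by
                refine mul_le_mul ?_ ?_ (abs_nonneg _) (norm_nonneg _)
                · calc |ρ.im| = |(ρ - (α:ℂ)).im| := by simp
                    _ ≤ ‖ρ - (α:ℂ)‖ := Complex.abs_im_le_norm _
                · calc |ρ.im| = |(ρ - 1).im| := by simp
                    _ ≤ ‖ρ - 1‖ := Complex.abs_im_le_norm _
            _ = ‖(ρ - (α:ℂ)) * (ρ - 1)‖ := (norm_mul _ _).symm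
        · rw [norm_mul]
          exact mul_pos (norm_pos_iff.2 (hρα α)) (norm_pos_iff.2 hρ1)
    _ = 1 / (x * L ^ 2 * ρ.im ^ 2) := by
        rw [integral_mul_const, IB, one_div, one_div, ← mul_inv]
end
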